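/- Let p, q be positive integers and α : (ZMod p) × (ZMod q) → ℝ a probability distribution with α(0,0) = 0. Let L_* be the linear map on the complex matrices indexed by (ZMod p) × (ZMod q) given by L_*(x) = Σ_{(i,j)} α(-i,-j) (J_p^i ⊗ J_q^j) x (J_p^i ⊗ J_q^j)* − x, and let Q be the complex matrix Q = Σ_{(i,j)} α(i,j) (J_p^i ⊗ J_q^j) − I. Then for every t ∈ ℝ and all i, i' ∈ ZMod p, j, j' ∈ ZMod q, the exponential of the endomorphism t·L_* satisfies exp(t·L_*)(E_{(i,j),(i',j')}) = Σ_{(m,n)} (exp(tQ))_{(0,0),(m,n)} E_{(m+i,n+j),(m+i',n+j')}. -/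

import Mathlib

open Matrix Kronecker

noncomputable section

attribute [local instance]
  Matrix.frobeniusNormedAddCommGroup Matrix.frobeniusNormedSpace

/-- The primary permutation (left-shift) matrix `J_p`. -/
def Jmat (p : ℕ) : Matrix (ZMod p) (ZMod p) ℂ :=
  Matrix.of fun i j => if j = i + 1 then 1 else 0

/-- The Kraus operator `J_p^i ⊗ J_q^j`. -/
def Kr (p q : ℕ) [NeZero p] [NeZero q] (i : ZMod p) (j : ZMod q) :
    Matrix (ZMod p × ZMod q) (ZMod p × ZMod q) ℂ :=
  (Jmat p ^ i.val) ⊗ₖ (Jmat q ^ j.val)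

/-- The predual circulant GKSL generator `L_*` associated with `α`, as a linear
endomorphism of the matrix space: `L_*(x) = Σ α(-i,-j) K x Kᴴ − x`. -/
def LstarLin (p q : ℕ) [NeZero p] [NeZero q] (α : ZMod p × ZMod q → ℝ) :
    Matrix (ZMod p × ZMod q) (ZMod p × ZMod q) ℂ →ₗ[ℂ]
      Matrix (ZMod p × ZMod q) (ZMod p × ZMod q) ℂ :=
  (∑ ij : ZMod p × ZMod q,
    (α (-ij.1, -ij.2) : ℂ) •
      (LinearMap.mulLeft ℂ (Kr p q ij.1 ij.2) ∘ₗ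
        LinearMap.mulRight ℂ (Kr p q ij.1 ij.2)ᴴ)) - LinearMap.id

/-- Port helper: the operator space is a topological ring (via its normed-ring structure). -/
instance matCLMIsTopologicalRing (n : Type) [Fintype n] :
    IsTopologicalRing (Matrix n n ℂ →L[ℂ] Matrix n n ℂ) :=
  @NonUnitalSeminormedRing.toIsTopologicalRing _
    (@NonUnitalNormedRing.toNonUnitalSeminormedRing _ (@NormedRing.toNonUnitalNormedRing _
      (ContinuousLinearMap.toNormedRing (𝕜 := ℂ) (E := Matrix n n ℂ))))

attribute [local instance] Matrix.frobeniusNormedRing Matrix.frobeniusNormedAlgebra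

open NormedSpace
open scoped Nat

section Aux

lemma exp_clm_apply {V : Type*} [NormedAddCommGroup V] [NormedSpace ℂ V] [CompleteSpace V]
    (A : V →L[ℂ] V) (v : V) :
    exp A v = ∑' n : ℕ, (n ! : ℂ)⁻¹ • (A ^ n) v := by
  have h := (ContinuousLinearMap.apply ℂ V v).map_tsum (expSeries_summable' (𝕂 := ℂ) A)
  rw [exp_eq_tsum ℂ]
  simpa using h

lemma intertwine {V W : Type*} [NormedAddCommGroup V] [NormedSpace ℂ V] [CompleteSpace V]
    [NormedAddCommGroup W] [NormedSpace ℂ W] [CompleteSpace W]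
    (f : V →L[ℂ] W) (A : V →L[ℂ] V) (B : W →L[ℂ] W)
    (h : ∀ v, f (A v) = B (f v)) (v : V) :
    f (exp A v) = exp B (f v) := by
  have hn : ∀ n (v : V), f ((A ^ n) v) = (B ^ n) (f v) := by
    intro n
    induction n with
    | zero => simp
    | succ n ih =>
      intro v
      rw [pow_succ, pow_succ, ContinuousLinearMap.mul_apply, ContinuousLinearMap.mul_apply,
        ih, h]
  rw [exp_clm_apply, exp_clm_apply]
  have hs : Summable fun n : ℕ => (n ! : ℂ)⁻¹ • (A ^ n) v := by
    have := (ContinuousLinearMap.apply ℂ V v).summable (expSeries_summable' (𝕂 := ℂ) A)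
    simpa using this
  rw [f.map_tsum hs]
  exact tsum_congr fun n => by rw [f.map_smul, hn]

lemma Jpow (p : ℕ) [NeZero p] (n : ℕ) :
    Jmat p ^ n = Matrix.of (fun a c => if c = a + (n : ZMod p) then 1 else 0) := by
  induction n with
  | zero => ext a c; simp [Matrix.one_apply, eq_comm]
  | succ n ih =>
    ext a c
    rw [pow_succ, ih]
    simp only [Matrix.mul_apply, Matrix.of_apply, Jmat]
    rw [Finset.sum_eq_single (a + (n : ZMod p))]
    · push_cast; simp [add_assoc]
    · intro b _ hb; simp [hb]
    · simp

lemma Kr_apply (p q : ℕ) [NeZero p] [NeZero q] (i : ZMod p) (j : ZMod q)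
    (a b : ZMod p × ZMod q) :
    Kr p q i j a b = if b = a + (i, j) then 1 else 0 := by
  obtain ⟨a1, a2⟩ := a; obtain ⟨b1, b2⟩ := b
  simp only [Kr, Jpow, kroneckerMap_apply, Matrix.of_apply, Prod.mk_add_mk, Prod.mk.injEq,
    ZMod.natCast_val, ZMod.cast_id]
  by_cases h1 : b1 = a1 + i <;> by_cases h2 : b2 = a2 + j <;> simp [h1, h2]

variable (p q : ℕ) [NeZero p] [NeZero q]

lemma Kr_mul (i : ZMod p) (j : ZMod q) (M : Matrix (ZMod p × ZMod q) (ZMod p × ZMod q) ℂ)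
    (a b : ZMod p × ZMod q) : (Kr p q i j * M) a b = M (a + (i, j)) b := by
  rw [Matrix.mul_apply, Finset.sum_eq_single (a + (i, j))]
  · rw [Kr_apply]; simp
  · intro c _ hc; rw [Kr_apply]; simp [hc]
  · simp

lemma mul_KrH (i : ZMod p) (j : ZMod q) (M : Matrix (ZMod p × ZMod q) (ZMod p × ZMod q) ℂ)
    (a b : ZMod p × ZMod q) : (M * (Kr p q i j)ᴴ) a b = M a (b + (i, j)) := by
  rw [Matrix.mul_apply, Finset.sum_eq_single (b + (i, j))]
  · rw [Matrix.conjTranspose_apply, Kr_apply]; simp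
  · intro c _ hc; rw [Matrix.conjTranspose_apply, Kr_apply]; simp [hc]
  · simp

lemma Lstar_apply (α : ZMod p × ZMod q → ℝ)
    (M : Matrix (ZMod p × ZMod q) (ZMod p × ZMod q) ℂ) (a b : ZMod p × ZMod q) :
    LstarLin p q α M a b =
      (∑ m : ZMod p × ZMod q, (α m : ℂ) * M (a - m) (b - m)) - M a b := by
  simp only [LstarLin, LinearMap.sub_apply, LinearMap.id_apply, LinearMap.sum_apply,
    LinearMap.smul_apply, LinearMap.comp_apply, LinearMap.mulLeft_apply,
    LinearMap.mulRight_apply, Matrix.sub_apply, Matrix.sum_apply, Matrix.smul_apply]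
  congr 1
  refine Fintype.sum_equiv (Equiv.neg (ZMod p × ZMod q)) _ _ fun ij => ?_
  rw [Kr_mul, mul_KrH]
  have h1 : (-ij.1, -ij.2) = -ij := rfl
  have h2 : a - -ij = a + ij := by abel
  have h3 : b - -ij = b + ij := by abel
  rw [Equiv.neg_apply, h1, h2, h3, smul_eq_mul]

/-- The embedding of a "row vector" matrix onto the diagonal orbit through `(a0, c0)`. -/
def Phi (a0 c0 : ZMod p × ZMod q) :
    Matrix (ZMod p × ZMod q) (ZMod p × ZMod q) ℂ →ₗ[ℂ]
      Matrix (ZMod p × ZMod q) (ZMod p × ZMod q) ℂ where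
  toFun M := Matrix.of fun x y => if y = x - a0 + c0 then M 0 (x - a0) else 0
  map_add' M N := by
    ext x y
    by_cases h : y = x - a0 + c0 <;> simp [h]
  map_smul' c M := by
    ext x y
    by_cases h : y = x - a0 + c0 <;> simp [h]

lemma Phi_apply (a0 c0 : ZMod p × ZMod q) (M : Matrix (ZMod p × ZMod q) (ZMod p × ZMod q) ℂ)
    (x y : ZMod p × ZMod q) :
    Phi p q a0 c0 M x y = if y = x - a0 + c0 then M 0 (x - a0) else 0 := rfl

lemma Phi_sum (a0 c0 : ZMod p × ZMod q) (M : Matrix (ZMod p × ZMod q) (ZMod p × ZMod q) ℂ) :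
    Phi p q a0 c0 M =
      ∑ n : ZMod p × ZMod q, M 0 n • Matrix.single (n + a0) (n + c0) (1 : ℂ) := by
  ext x y
  rw [Phi_apply, Matrix.sum_apply]
  rw [Finset.sum_eq_single (x - a0)]
  · simp only [Matrix.single, Matrix.smul_apply, Matrix.of_apply]
    by_cases h : y = x - a0 + c0
    · rw [if_pos h, if_pos ⟨by abel, h.symm⟩, smul_eq_mul, mul_one]
    · rw [if_neg h, if_neg (fun hc => h hc.2.symm), smul_zero]
  · intro n _ hn
    have hx : ¬ n + a0 = x := by
      intro hh; apply hn; rw [← hh]; abel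
    simp only [Matrix.single, Matrix.smul_apply, Matrix.of_apply]
    rw [if_neg (fun hc => hx hc.1), smul_zero]
  · simp

lemma Phi_one (a0 c0 : ZMod p × ZMod q) :
    Phi p q a0 c0 1 = Matrix.single a0 c0 (1 : ℂ) := by
  rw [Phi_sum, Finset.sum_eq_single 0]
  · simp
  · intro n _ hn
    rw [Matrix.one_apply_ne' hn, zero_smul]
  · simp

end Aux

theorem stmt12 (p q : ℕ) [NeZero p] [NeZero q]
    (α : ZMod p × ZMod q → ℝ) (hα : ∀ ij, 0 ≤ α ij)
    (hsum : ∑ ij : ZMod p × ZMod q, α ij = 1) (h0 : α (0, 0) = 0)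
    (Q : Matrix (ZMod p × ZMod q) (ZMod p × ZMod q) ℂ)
    (hQ : Q = (∑ ij : ZMod p × ZMod q, (α ij : ℂ) • Kr p q ij.1 ij.2) - 1) :
    ∀ (t : ℝ) (i i' : ZMod p) (j j' : ZMod q),
      NormedSpace.exp
          ((t : ℂ) • (LinearMap.toContinuousLinearMap (LstarLin p q α)))
          (Matrix.single (i, j) (i', j') (1 : ℂ)) =
        ∑ mn : ZMod p × ZMod q,
          NormedSpace.exp ((t : ℂ) • Q) (0, 0) mn •
            Matrix.single (mn.1 + i, mn.2 + j) (mn.1 + i', mn.2 + j') (1 : ℂ) := by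
  intro t i i' j j'
  set a0 : ZMod p × ZMod q := (i, j) with ha0
  set c0 : ZMod p × ZMod q := (i', j') with hc0
  -- entry formula for Q
  have hQapp : ∀ c k : ZMod p × ZMod q, Q c k = (α (k - c) : ℂ) - if c = k then 1 else 0 := by
    intro c k
    rw [hQ]
    simp only [Matrix.sub_apply, Matrix.sum_apply, Matrix.smul_apply, Matrix.one_apply]
    congr 1
    rw [Finset.sum_eq_single (k - c)]
    · rw [Kr_apply]
      have h2 : ((k - c).1, (k - c).2) = k - c := rfl
      have h3 : k = c + (k - c) := by abel
      rw [h2, if_pos h3, smul_eq_mul, mul_one]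
    · intro m _ hm
      rw [Kr_apply]
      have h2 : ((m.1 : ZMod p), (m.2 : ZMod q)) = m := rfl
      have h3 : ¬ k = c + m := by
        intro h; apply hm; rw [h]; abel
      rw [h2, if_neg h3, smul_zero]
    · simp
  -- row formula for M * Q
  have hMQ : ∀ (M : Matrix (ZMod p × ZMod q) (ZMod p × ZMod q) ℂ) (k : ZMod p × ZMod q),
      (M * Q) 0 k = (∑ m : ZMod p × ZMod q, (α m : ℂ) * M 0 (k - m)) - M 0 k := by
    intro M k
    rw [Matrix.mul_apply]
    have hterm : ∀ c : ZMod p × ZMod q, M 0 c * Q c k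
        = M 0 c * (α (k - c) : ℂ) - M 0 c * (if c = k then 1 else 0) := by
      intro c; rw [hQapp]; ring
    rw [Finset.sum_congr rfl fun c _ => hterm c, Finset.sum_sub_distrib]
    congr 1
    · refine Fintype.sum_equiv (Equiv.subLeft k) _ _ fun m => ?_
      rw [Equiv.subLeft_apply]
      have hkk : k - (k - m) = m := by abel
      rw [hkk, mul_comm]
    · simp
  -- the intertwining relation at the linear level
  have hinter : ∀ M : Matrix (ZMod p × ZMod q) (ZMod p × ZMod q) ℂ,
      Phi p q a0 c0 (M * Q) = LstarLin p q α (Phi p q a0 c0 M) := by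
    intro M
    ext x y
    rw [Lstar_apply]
    have hcond : ∀ m : ZMod p × ZMod q, (y - m = x - m - a0 + c0) ↔ (y = x - a0 + c0) := by
      intro m
      have e : x - m - a0 + c0 = x - a0 + c0 - m := by abel
      rw [e, sub_left_inj]
    by_cases h : y = x - a0 + c0
    · rw [Phi_apply, if_pos h, hMQ]
      have hterm : ∀ m : ZMod p × ZMod q, (α m : ℂ) * Phi p q a0 c0 M (x - m) (y - m)
          = (α m : ℂ) * M 0 (x - a0 - m) := by
        intro m
        rw [Phi_apply, if_pos ((hcond m).2 h)]
        have e2 : x - m - a0 = x - a0 - m := by abel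
        rw [e2]
      rw [Finset.sum_congr rfl fun m _ => hterm m, Phi_apply, if_pos h]
    · rw [Phi_apply, if_neg h]
      have hterm : ∀ m : ZMod p × ZMod q, (α m : ℂ) * Phi p q a0 c0 M (x - m) (y - m) = 0 := by
        intro m
        rw [Phi_apply, if_neg (fun hh => h ((hcond m).1 hh)), mul_zero]
      rw [Finset.sum_congr rfl fun m _ => hterm m, Phi_apply, if_neg h]
      simp
  -- continuous linear versions
  set S : Matrix (ZMod p × ZMod q) (ZMod p × ZMod q) ℂ := (t : ℂ) • Q with hS
  set A := LinearMap.toContinuousLinearMap (LinearMap.mulRight ℂ S) with hA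
  set Φc := LinearMap.toContinuousLinearMap (Phi p q a0 c0) with hΦ
  set B := (t : ℂ) • LinearMap.toContinuousLinearMap (LstarLin p q α) with hB
  have hAM : ∀ M, A M = M * S := fun M => congrFun (LinearMap.coe_toContinuousLinearMap' _) M
  have hΦM : ∀ M, Φc M = Phi p q a0 c0 M :=
    fun M => congrFun (LinearMap.coe_toContinuousLinearMap' _) M
  have hcomm : ∀ M, Φc (A M) = B (Φc M) := by
    intro M
    rw [hAM, hΦM, hΦM, hS, mul_smul_comm, (Phi p q a0 c0).map_smul, hinter, hB,
      ContinuousLinearMap.smul_apply]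
    congr 1
  have key := intertwine Φc A B hcomm 1
  -- compute exp A 1 = exp S
  have hpow : ∀ (n : ℕ) (M : Matrix (ZMod p × ZMod q) (ZMod p × ZMod q) ℂ),
      (A ^ n) M = M * S ^ n := by
    intro n
    induction n with
    | zero => simp
    | succ n ih =>
      intro M
      rw [pow_succ, ContinuousLinearMap.mul_apply, hAM, ih, pow_succ', mul_assoc]
  have hexpA : NormedSpace.exp A 1 = NormedSpace.exp S := by
    refine (exp_clm_apply A 1).trans ?_
    rw [NormedSpace.exp_eq_tsum ℂ]
    exact tsum_congr fun n =>
      congrArg (fun x => ((n ! : ℂ))⁻¹ • x) ((hpow n 1).trans (one_mul _))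
  erw [hexpA, hΦM, hΦM, Phi_one, Phi_sum] at key
  refine key.symm.trans ?_
  refine Finset.sum_congr rfl fun mn _ => ?_
  have h00 : ((0, 0) : ZMod p × ZMod q) = 0 := rfl
  have h1 : ((mn.1 + i, mn.2 + j) : ZMod p × ZMod q) = mn + a0 := rfl
  have h2 : ((mn.1 + i', mn.2 + j') : ZMod p × ZMod q) = mn + c0 := rfl
  rw [h00, h1, h2]
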